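/- The reflection equation is invariant under transposition of the K-matrix: if a family K : ℂ \ {0} → Mat₂(ℂ) satisfies the reflection equation with parameters (s₀, s₁), then the family x ↦ K(x)ᵀ (the matrix transpose) also satisfies the reflection equation with the same parameters (s₀, s₁). -/
import Mathlib


open Matrix
open scoped Kronecker

/-- The R-matrix of the 6-vertex model, acting on `ℂ² ⊗ ℂ²`. -/
noncomputable def Rm (q : ℂ) (s₀ s₁ : ℤ) (z : ℂ) :
    Matrix (Fin 2 × Fin 2) (Fin 2 × Fin 2) ℂ :=
  Matrix.of fun p p' =>
    if p = p' then (if p.1 = p.2 then q - q⁻¹ * z ^ (s₀ + s₁) else 1 - z ^ (s₀ + s₁))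
    else if p = (0, 1) ∧ p' = (1, 0) then (q - q⁻¹) * z ^ s₁
    else if p = (1, 0) ∧ p' = (0, 1) then (q - q⁻¹) * z ^ s₀
    else 0

/-- The second R-matrix of the 6-vertex model. -/
noncomputable def Rbar (q : ℂ) (s₀ s₁ : ℤ) (z : ℂ) :
    Matrix (Fin 2 × Fin 2) (Fin 2 × Fin 2) ℂ :=
  Matrix.of fun p p' =>
    if p = p' then (if p.1 = p.2 then q - q⁻¹ * z ^ (-(s₀ + s₁)) else 1 - z ^ (-(s₀ + s₁)))
    else if p = (0, 1) ∧ p' = (1, 0) then (q - q⁻¹) * z ^ (-s₀)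
    else if p = (1, 0) ∧ p' = (0, 1) then (q - q⁻¹) * z ^ (-s₁)
    else 0

/-- A family `K` of 2×2 matrices satisfies the reflection equation with parameters
`(s₀, s₁)`. -/
def SatisfiesRE (q : ℂ) (s₀ s₁ : ℤ) (K : ℂ → Matrix (Fin 2) (Fin 2) ℂ) : Prop :=
  ∀ x y : ℂ, x ≠ 0 → y ≠ 0 →
    Rm q s₀ s₁ (y / x) * (K x ⊗ₖ (1 : Matrix (Fin 2) (Fin 2) ℂ)) *
        Rbar q s₀ s₁ (x * y) * ((1 : Matrix (Fin 2) (Fin 2) ℂ) ⊗ₖ K y)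
      = ((1 : Matrix (Fin 2) (Fin 2) ℂ) ⊗ₖ K y) * Rm q s₀ s₁ (1 / (x * y)) *
        (K x ⊗ₖ (1 : Matrix (Fin 2) (Fin 2) ℂ)) * Rbar q s₀ s₁ (x / y)


lemma Rm_transpose (q : ℂ) (s₀ s₁ : ℤ) (z : ℂ) :
    (Rm q s₀ s₁ z)ᵀ = Rbar q s₀ s₁ z⁻¹ := by
  ext ⟨i, j⟩ ⟨k, l⟩
  fin_cases i <;> fin_cases j <;> fin_cases k <;> fin_cases l <;>
    simp [Rm, Rbar, Matrix.transpose_apply, _root_.zpow_neg, _root_.inv_zpow, Prod.ext_iff]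

lemma Rbar_transpose (q : ℂ) (s₀ s₁ : ℤ) (z : ℂ) :
    (Rbar q s₀ s₁ z)ᵀ = Rm q s₀ s₁ z⁻¹ := by
  have := Rm_transpose q s₀ s₁ z⁻¹
  rw [inv_inv] at this
  rw [← this, transpose_transpose]

/-- The reflection equation is invariant under transposition of the K-matrix. -/
theorem reflection_equation_transpose_invariant
    (q : ℂ) (hq0 : q ≠ 0) (hq2 : q ^ 2 ≠ 1) (s₀ s₁ : ℤ)
    (K : ℂ → Matrix (Fin 2) (Fin 2) ℂ) (hK : SatisfiesRE q s₀ s₁ K) :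
    SatisfiesRE q s₀ s₁ (fun x => (K x)ᵀ) := by
  intro x y hx hy
  have h := congrArg Matrix.transpose (hK x y hx hy)
  simp only [Matrix.transpose_mul, ← Matrix.kroneckerMap_transpose, Matrix.transpose_one,
    Rm_transpose, Rbar_transpose, inv_div, one_div, inv_inv] at h
  simp only [one_div]
  simp only [Matrix.mul_assoc] at h ⊢
  exact h.symm
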